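/- Let 𝒮 = (S_1,…,S_n) be a list of finite nonempty subsets of a finite universe U = ⋃_i S_i, and let G and c be the genome and CNP constructed from 𝒮 as described. Let E be any sequence of events (deletions and duplications) such that cnp(G⟨E⟩) = c. Then for each u ∈ U there is at least one position p of G such that G[p] = γ_u and p is unimportant with respect to E. -/

import Mathlib

/-- An event is either a deletion `del i j` (removing the substring from position `i`
to position `j`, 1-based) or a duplication `dup i j p` (copying the substring from
position `i` to position `j` and inserting the copy after position `p`). -/
inductive GEvent where
  | del (i j : ℕ)
  | dup (i j p : ℕ)
deriving DecidableEq

/-- Applying an event to a genome (a list of characters). -/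
def applyEvent {α : Type*} (G : List α) : GEvent → List α
  | .del i j => G.take (i - 1) ++ G.drop j
  | .dup i j p => G.take p ++ ((G.drop (i - 1)).take (j - i + 1)) ++ G.drop p

/-- Validity of an event on a genome: `del i j` requires `1 ≤ i ≤ j ≤ |G|`;
`dup i j p` requires `1 ≤ i ≤ j ≤ |G|` and `p ∈ {0,…,i−1} ∪ {j,…,|G|}`. -/
def GEvent.Valid {α : Type*} (G : List α) : GEvent → Prop
  | .del i j => 1 ≤ i ∧ i ≤ j ∧ j ≤ G.length
  | .dup i j p => 1 ≤ i ∧ i ≤ j ∧ j ≤ G.length ∧ (p ≤ i - 1 ∨ (j ≤ p ∧ p ≤ G.length))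

/-- `applyEvents G E` is `G⟨E⟩`, the genome obtained by successively applying
the events of `E` to `G`. -/
def applyEvents {α : Type*} (G : List α) : List GEvent → List α
  | [] => G
  | e :: E => applyEvents (applyEvent G e) E

/-- A sequence of events is valid on `G` if each event is valid on the genome
obtained by applying the previous events. -/
def ValidSeq {α : Type*} (G : List α) : List GEvent → Prop
  | [] => True
  | e :: E => e.Valid G ∧ ValidSeq (applyEvent G e) E

/-- The copy-number profile of a genome: the number of occurrences of each character. -/
def cnp {α : Type*} [DecidableEq α] (G : List α) : α → ℕ := fun s => G.count s

/-- The Genome-to-CNP distance: the minimum length of a valid event sequence turning `G`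
into a genome with CNP `c` (`⊤` if there is none). -/
noncomputable def dGCNP {α : Type*} [DecidableEq α] (G : List α) (c : α → ℕ) : ℕ∞ :=
  sInf { k : ℕ∞ | ∃ E : List GEvent,
    ValidSeq G E ∧ (E.length : ℕ∞) = k ∧ cnp (applyEvents G E) = c }

/-- The genome constructed from a SET-COVER instance: the alphabet is `Fin n ⊕ V`, where
`Sum.inl i` is the separator character `σᵢ` and `Sum.inr u` is the character `γᵤ`;
`q i` lists the elements of `S i` (each exactly once), and
`G = σ₁ q(S₁) σ₂ q(S₂) ⋯ σₙ q(Sₙ)`. -/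
def scGenome {V : Type*} (n : ℕ) (q : Fin n → List V) : List (Fin n ⊕ V) :=
  (List.finRange n).flatMap (fun i => Sum.inl i :: (q i).map Sum.inr)

/-- The CNP constructed from a SET-COVER instance: `c(σᵢ) = 1` and `c(γᵤ) = f(u) − 1`,
where `f(u)` is the number of sets of the instance containing `u`. -/
def scCNP {V : Type*} [Fintype V] [DecidableEq V] (n : ℕ) (S : Fin n → Finset V) :
    (Fin n ⊕ V) → ℕ
  | Sum.inl _ => 1
  | Sum.inr u => (Finset.univ.filter fun i => u ∈ S i).card - 1

/-- The Genome-to-Genome distance: the minimum length of a valid event sequence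
turning `G` into `G'` (`⊤` if there is none). -/
noncomputable def dGG {α : Type*} (G G' : List α) : ℕ∞ :=
  sInf { k : ℕ∞ | ∃ E : List GEvent,
    ValidSeq G E ∧ (E.length : ℕ∞) = k ∧ applyEvents G E = G' }

/-- The augmented genome of `G = g₁…gₙ`: each character is tagged with its
(1-based) position, giving the genome `(1, g₁) (2, g₂) … (n, gₙ)`. -/
def augment {α : Type*} (G : List α) : List (ℕ × α) :=
  ((List.range G.length).map (· + 1)).zip G

/-- Position `p` (1-based) of `G` is unimportant with respect to the event sequence `E`
if the character of the augmented genome tagged with `p` has no occurrence in `Ĝ⟨E⟩`. -/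
def Unimportant {α : Type*} (G : List α) (E : List GEvent) (p : ℕ) : Prop :=
  ∀ x ∈ applyEvents (augment G) E, x.1 ≠ p


section Helpers

lemma mem_applyEvent' {α : Type*} {L : List α} {e : GEvent} {x : α}
    (hx : x ∈ applyEvent L e) : x ∈ L := by
  cases e with
  | del i j =>
    simp only [applyEvent, List.mem_append] at hx
    rcases hx with h | h
    · exact List.mem_of_mem_take h
    · exact List.mem_of_mem_drop h
  | dup i j p =>
    simp only [applyEvent, List.mem_append] at hx
    rcases hx with (h | h) | h
    · exact List.mem_of_mem_take h
    · exact List.mem_of_mem_drop (List.mem_of_mem_take h)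
    · exact List.mem_of_mem_drop h

lemma mem_applyEvents' {α : Type*} {L : List α} {E : List GEvent} {x : α}
    (hx : x ∈ applyEvents L E) : x ∈ L := by
  induction E generalizing L with
  | nil => exact hx
  | cons e E ih => exact mem_applyEvent' (ih hx)

lemma map_applyEvent' {α β : Type*} (f : α → β) (L : List α) (e : GEvent) :
    (applyEvent L e).map f = applyEvent (L.map f) e := by
  cases e <;> simp [applyEvent, List.map_take, List.map_drop]

lemma map_applyEvents' {α β : Type*} (f : α → β) (L : List α) (E : List GEvent) :
    (applyEvents L E).map f = applyEvents (L.map f) E := by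
  induction E generalizing L with
  | nil => rfl
  | cons e E ih => simp [applyEvents, ih, map_applyEvent']

lemma augment_snd' {α : Type*} (G : List α) : (augment G).map Prod.snd = G := by
  unfold augment
  exact List.map_snd_zip (by simp)

lemma augment_fst_nodup' {α : Type*} (G : List α) :
    ((augment G).map Prod.fst).Nodup := by
  unfold augment
  rw [List.map_fst_zip (by simp)]
  exact (List.nodup_range (n := G.length)).map (fun a b => by omega)

lemma mem_augment' {α : Type*} {G : List α} {x : ℕ × α} :
    x ∈ augment G ↔ ∃ k, ∃ h : k < G.length, x = (k + 1, G[k]) := by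
  unfold augment
  rw [List.mem_iff_getElem]
  constructor
  · rintro ⟨i, hi, rfl⟩
    have hi' : i < G.length := by simpa using hi
    exact ⟨i, hi', by simp [List.getElem_zip]⟩
  · rintro ⟨k, hk, rfl⟩
    exact ⟨k, by simpa using hk, by simp [List.getElem_zip]⟩

lemma count_scGenome' {V : Type*} [Fintype V] [DecidableEq V] (n : ℕ) (S : Fin n → Finset V)
    (q : Fin n → List V) (hq : ∀ i, (q i).Nodup) (hqmem : ∀ i u, u ∈ q i ↔ u ∈ S i) (u : V) :
    (scGenome n q).count (Sum.inr u) = (Finset.univ.filter fun i => u ∈ S i).card := by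
  unfold scGenome
  rw [List.count_flatMap]
  have h : ∀ i : Fin n, (List.count (Sum.inr u : Fin n ⊕ V) ∘
      fun i => Sum.inl i :: (q i).map Sum.inr) i = if u ∈ S i then 1 else 0 := by
    intro i
    simp only [Function.comp_apply, List.count_cons]
    have hcm : List.count (Sum.inr u : Fin n ⊕ V) ((q i).map Sum.inr) = List.count u (q i) := by
      simp only [List.count, List.countP_map]
      apply List.countP_congr
      intro a _
      exact Iff.rfl
    have hne : ((Sum.inl i : Fin n ⊕ V) == Sum.inr u) = false := rfl
    rw [hcm, hne]
    by_cases hu : u ∈ S i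
    · rw [List.count_eq_one_of_mem (hq i) ((hqmem i u).mpr hu)]
      simp [hu]
    · rw [List.count_eq_zero_of_not_mem (fun hm => hu ((hqmem i u).mp hm))]
      simp [hu]
  rw [List.map_congr_left (fun i _ => h i), ← Fin.sum_univ_def, Finset.card_filter]

instance sumLawfulBEq {A B : Type*} [DecidableEq A] [DecidableEq B] :
    LawfulBEq (A ⊕ B) where
  eq_of_beq {a b} h := by
    cases a <;> cases b
    · exact congrArg Sum.inl (eq_of_beq h)
    · exact Bool.noConfusion h
    · exact Bool.noConfusion h
    · exact congrArg Sum.inr (eq_of_beq h)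
  rfl {a} := by
    cases a with
    | inl x => show (x == x) = true; exact beq_self_eq_true x
    | inr x => show (x == x) = true; exact beq_self_eq_true x

lemma count_congr_inst {α : Type*} (i1 i2 : BEq α) [@LawfulBEq α i1] [@LawfulBEq α i2]
    (x : α) (l : List α) : @List.count _ i1 x l = @List.count _ i2 x l := by
  simp only [List.count]
  apply List.countP_congr
  intro a _
  rw [@beq_iff_eq _ i1, @beq_iff_eq _ i2]

end Helpers

/-- Claim 1 in the proof of Lemma 4 of the paper: let `G`, `c` be the
genome and CNP constructed from the SET-COVER instance `S₁, …, Sₙ` (nonempty finite sets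
covering the finite universe `V`), and let `E` be any valid sequence of events with
`cnp(G⟨E⟩) = c`.  Then for each element `u` of the universe there is at least one
(1-based) position `p` of `G` carrying the character `γᵤ = Sum.inr u` that is
unimportant with respect to `E`. -/
theorem exists_unimportant_position
    {V : Type*} [Fintype V] [DecidableEq V] (n : ℕ) (S : Fin n → Finset V)
    (hne : ∀ i, (S i).Nonempty)
    (hU : ∀ u : V, ∃ i, u ∈ S i)
    (q : Fin n → List V)
    (hq : ∀ i, (q i).Nodup)
    (hqmem : ∀ i u, u ∈ q i ↔ u ∈ S i)
    (E : List GEvent)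
    (hvalid : ValidSeq (scGenome n q) E)
    (hcnp : cnp (applyEvents (scGenome n q) E) = scCNP n S) :
    ∀ u : V, ∃ p : ℕ, 1 ≤ p ∧ p ≤ (scGenome n q).length ∧
      (scGenome n q)[p - 1]? = some (Sum.inr u) ∧
      Unimportant (scGenome n q) E p := by
  intro u
  classical
  set G := scGenome n q with hGdef
  by_contra hcon
  push_neg at hcon
  set A := applyEvents (augment G) E with hA
  set pred : ℕ × (Fin n ⊕ V) → Bool := fun x => x.2 == Sum.inr u with hpred
  set P : List ℕ := ((augment G).filter pred).map Prod.fst with hP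
  set F : List ℕ := ((A.filter pred)).map Prod.fst with hF
  set f : ℕ := (Finset.univ.filter fun i => u ∈ S i).card with hfdef
  have hfst := augment_fst_nodup' G
  -- basic length computations
  have hPlen : P.length = f := by
    have h1 : P.length = List.count (Sum.inr u) ((augment G).map Prod.snd) := by
      simp only [hP, List.length_map, ← List.countP_eq_length_filter, List.count,
        List.countP_map]
      rfl
    rw [h1, augment_snd' G, hGdef, count_scGenome' n S q hq hqmem u]
  have hf1 : 1 ≤ f := by
    obtain ⟨i, hi⟩ := hU u
    have : i ∈ Finset.univ.filter fun j => u ∈ S j := by simp [hi]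
    have := Finset.card_pos.mpr ⟨i, this⟩
    omega
  have hAsnd : A.map Prod.snd = applyEvents G E := by
    rw [hA, map_applyEvents', augment_snd']
  have hFlen : F.length = f - 1 := by
    have h1 : F.length = List.count (Sum.inr u) (A.map Prod.snd) := by
      simp only [hF, List.length_map, ← List.countP_eq_length_filter, List.count,
        List.countP_map]
      rfl
    rw [h1, hAsnd, count_congr_inst Sum.instBEq instBEqOfDecidableEq (Sum.inr u) (applyEvents G E)]
    have := congrFun hcnp (Sum.inr u)
    simpa [cnp, scCNP] using this
  -- P is nodup
  have hPnodup : P.Nodup := by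
    exact hfst.sublist (((augment G).filter_sublist).map Prod.fst)
  -- every element of P lies in F
  have hsub : ∀ p ∈ P, p ∈ F := by
    intro p hp
    obtain ⟨y, hy, rfl⟩ := List.mem_map.mp hp
    obtain ⟨hymem, hypred⟩ := List.mem_filter.mp hy
    have hy2 : y.2 = Sum.inr u := by
      rcases h2 : y.2 with a | v
      · rw [hpred] at hypred
        simp only at hypred
        rw [h2] at hypred
        exact absurd hypred (by rw [show ((Sum.inl a : Fin n ⊕ V) == Sum.inr u) = false from rfl]; simp)
      · rw [hpred] at hypred
        simp only at hypred
        rw [h2, show ((Sum.inr v : Fin n ⊕ V) == Sum.inr u) = (v == u) from rfl,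
          beq_iff_eq] at hypred
        rw [hypred]
    obtain ⟨k, hk, hyk⟩ := mem_augment'.mp hymem
    have hy1 : y.1 = k + 1 := by rw [hyk]
    have hGk : G[k] = Sum.inr u := by
      have := congrArg Prod.snd hyk
      simp only at this
      rw [← this, hy2]
    have h1le : 1 ≤ y.1 := by omega
    have hle : y.1 ≤ G.length := by omega
    have hget : G[y.1 - 1]? = some (Sum.inr u) := by
      have : y.1 - 1 = k := by omega
      rw [this, List.getElem?_eq_getElem hk, hGk]
    have hnotun := hcon y.1 h1le hle hget
    rw [Unimportant] at hnotun
    push_neg at hnotun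
    obtain ⟨x, hxA, hx1⟩ := hnotun
    have hxaug : x ∈ augment G := mem_applyEvents' hxA
    have hxy : x = y :=
      List.inj_on_of_nodup_map hfst hxaug hymem (by rw [hx1])
    refine List.mem_map.mpr ⟨x, List.mem_filter.mpr ⟨hxA, ?_⟩, hx1⟩
    rw [hpred]
    simp only
    rw [hxy, hy2, show ((Sum.inr u : Fin n ⊕ V) == Sum.inr u) = (u == u) from rfl]
    exact beq_self_eq_true u
  -- counting contradiction
  have h1 : P.toFinset.card = P.length := List.toFinset_card_of_nodup hPnodup
  have h2 : P.toFinset ⊆ F.toFinset := by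
    intro p hp
    exact List.mem_toFinset.mpr (hsub p (List.mem_toFinset.mp hp))
  have h3 : F.toFinset.card ≤ F.length := List.toFinset_card_le F
  have := Finset.card_le_card h2
  omega
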